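/- arXiv:1704.08469 — 2 statements merged into one kernel-verified Lean document; each statement's English description precedes it below -/
import Mathlib

section
/- Let z be a standard circularly symmetric complex Gaussian random variable with density (1/π)e^{−|z|²} on ℂ. Then for every r > 0, E[ |z| · min(|z|, r) ] = 1 − e^{−r²} + (r√π/2)·erfc(r), where erfc(r) = (2/√π)∫_r^∞ e^{−t²} dt. -/
open MeasureTheory Set Real Filter

lemma aux_tendsto : Tendsto (fun y : ℝ => y * Real.exp (-y ^ 2)) atTop (nhds 0) := by
  have h1 : Tendsto (fun y : ℝ => y * Real.exp (-y)) atTop (nhds 0) := by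
    simpa using Real.tendsto_pow_mul_exp_neg_atTop_nhds_zero 1
  apply tendsto_of_tendsto_of_tendsto_of_le_of_le' tendsto_const_nhds h1
  · filter_upwards [eventually_ge_atTop (0:ℝ)] with y hy
    positivity
  · filter_upwards [eventually_ge_atTop (1:ℝ)] with y hy
    have : Real.exp (-y ^ 2) ≤ Real.exp (-y) := by
      apply Real.exp_le_exp.2
      nlinarith
    nlinarith [Real.exp_pos (-y^2), Real.exp_pos (-y)]

lemma aux_int_sq (r : ℝ) (hr : 0 < r) :
    IntegrableOn (fun y : ℝ => y ^ 2 * Real.exp (-y ^ 2)) (Ioi r) := by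
  have h := integrableOn_rpow_mul_exp_neg_mul_sq (b := 1) one_pos (s := 2) (by norm_num)
  have h2 : IntegrableOn (fun y : ℝ => y ^ (2:ℝ) * Real.exp (-1 * y ^ 2)) (Ioi r) :=
    h.mono_set (Ioi_subset_Ioi hr.le)
  apply h2.congr_fun _ measurableSet_Ioi
  intro y hy
  have hy0 : (0:ℝ) ≤ y := le_of_lt (hr.trans hy)
  simp only [neg_mul, one_mul]
  rw [show (2:ℝ) = ((2:ℕ):ℝ) by norm_num, Real.rpow_natCast]

theorem stmt_7 (r : ℝ) (hr : 0 < r) :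
    ∫ z : ℂ, (‖z‖ * min (‖z‖) r) *
        ((1 / Real.pi) * Real.exp (-(‖z‖) ^ 2))
      = 1 - Real.exp (-r ^ 2) +
          (r * Real.sqrt Real.pi / 2) *
            ((2 / Real.sqrt Real.pi) * ∫ t in Set.Ioi r, Real.exp (-t ^ 2)) := by
  have hπ : (0:ℝ) < Real.pi := Real.pi_pos
  -- Step 1: reduce to radial integral
  have h1 : (∫ z : ℂ, (‖z‖ * min (‖z‖) r) *
        ((1 / Real.pi) * Real.exp (-(‖z‖) ^ 2)))
      = 2 * Real.pi * ∫ y in Ioi (0:ℝ),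
          y * ((y * min y r) * ((1 / Real.pi) * Real.exp (-y ^ 2))) := by
    have h := integral_fun_norm_addHaar (volume : Measure ℂ)
      (fun y : ℝ => (y * min y r) * ((1 / Real.pi) * Real.exp (-y ^ 2)))
    simp only [Complex.finrank_real_complex, Complex.volume_ball, smul_eq_mul,
      nsmul_eq_mul, Nat.cast_ofNat, pow_one] at h
    rw [h]
    simp only [measureReal_def, Complex.volume_ball, ENNReal.ofReal_one, one_pow, one_mul, ENNReal.coe_toReal, NNReal.coe_real_pi]
    norm_num
    ring
  rw [h1]
  -- pull out 1/π
  have h2 : (∫ y in Ioi (0:ℝ), y * ((y * min y r) * ((1 / Real.pi) * Real.exp (-y ^ 2))))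
      = (1 / Real.pi) * ∫ y in Ioi (0:ℝ), y ^ 2 * min y r * Real.exp (-y ^ 2) := by
    rw [← integral_const_mul]
    congr 1 with y
    ring
  rw [h2]
  set g : ℝ → ℝ := fun y => y ^ 2 * min y r * Real.exp (-y ^ 2) with hg
  -- integrabilities
  have hIoc : IntegrableOn g (Ioc 0 r) := by
    apply (ContinuousOn.integrableOn_compact isCompact_Icc ?_).mono_set Ioc_subset_Icc_self
    fun_prop
  have hIoi : IntegrableOn g (Ioi r) := by
    have h3 : IntegrableOn (fun y : ℝ => r * (y ^ 2 * Real.exp (-y ^ 2))) (Ioi r) :=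
      (aux_int_sq r hr).const_mul r
    apply h3.congr_fun _ measurableSet_Ioi
    intro y hy
    have : min y r = r := min_eq_right (le_of_lt hy)
    simp only [hg, this]
    ring
  -- split the integral
  have hsplit : (∫ y in Ioi (0:ℝ), g y) = (∫ y in Ioc 0 r, g y) + ∫ y in Ioi r, g y := by
    rw [← setIntegral_union (Ioc_disjoint_Ioi le_rfl) measurableSet_Ioi hIoc hIoi,
      Ioc_union_Ioi_eq_Ioi hr.le]
  -- first piece
  have hA : (∫ y in Ioc 0 r, g y) = 1/2 - ((1 + r ^ 2)/2) * Real.exp (-r ^ 2) := by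
    have hcong : (∫ y in Ioc 0 r, g y) = ∫ y in Ioc 0 r, y ^ 3 * Real.exp (-y ^ 2) := by
      apply setIntegral_congr_fun measurableSet_Ioc
      intro y hy
      have : min y r = y := min_eq_left hy.2
      simp only [hg, this]
      ring
    rw [hcong, ← intervalIntegral.integral_of_le hr.le]
    have hF : ∀ y : ℝ, HasDerivAt (fun y : ℝ => -((1 + y ^ 2)/2) * Real.exp (-y ^ 2))
        (y ^ 3 * Real.exp (-y ^ 2)) y := by
      intro y
      have hd1 : HasDerivAt (fun y : ℝ => -((1 + y ^ 2)/2)) (-y) y := by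
        have := ((hasDerivAt_pow 2 y).const_add 1).div_const 2
        have := this.fun_neg
        exact this.congr_deriv (by ring)
      have hd2 : HasDerivAt (fun y : ℝ => Real.exp (-y ^ 2))
          (Real.exp (-y ^ 2) * (-(2 * y))) y := by
        exact ((hasDerivAt_pow 2 y).fun_neg).exp.congr_deriv (by ring)
      exact (hd1.fun_mul hd2).congr_deriv (by ring)
    rw [intervalIntegral.integral_eq_sub_of_hasDerivAt (fun y _ => hF y) ?_]
    · norm_num
      linarith
    · apply ContinuousOn.intervalIntegrable
      fun_prop
  -- second piece
  have hB : (∫ y in Ioi r, g y)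
      = r * ((r/2) * Real.exp (-r ^ 2) + (1/2) * ∫ t in Ioi r, Real.exp (-t ^ 2)) := by
    have hcong : (∫ y in Ioi r, g y) = r * ∫ y in Ioi r, y ^ 2 * Real.exp (-y ^ 2) := by
      rw [← integral_const_mul]
      apply setIntegral_congr_fun measurableSet_Ioi
      intro y hy
      have : min y r = r := min_eq_right (le_of_lt hy)
      simp only [hg, this]
      ring
    have hexp : IntegrableOn (fun t : ℝ => Real.exp (-t ^ 2)) (Ioi r) := by
      have := (integrable_exp_neg_mul_sq (b := 1) one_pos).integrableOn (s := Ioi r)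
      simpa using this
    -- derivative part
    have hH : ∀ y : ℝ, HasDerivAt (fun y : ℝ => -(y/2) * Real.exp (-y ^ 2))
        (y ^ 2 * Real.exp (-y ^ 2) - (1/2) * Real.exp (-y ^ 2)) y := by
      intro y
      have hd1 : HasDerivAt (fun y : ℝ => -(y/2)) (-(1/2)) y := by
        simpa using ((hasDerivAt_id y).div_const 2).fun_neg
      have hd2 : HasDerivAt (fun y : ℝ => Real.exp (-y ^ 2))
          (Real.exp (-y ^ 2) * (-(2 * y))) y := by
        exact ((hasDerivAt_pow 2 y).fun_neg).exp.congr_deriv (by ring)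
      exact (hd1.fun_mul hd2).congr_deriv (by ring)
    have hint : IntegrableOn
        (fun y : ℝ => y ^ 2 * Real.exp (-y ^ 2) - (1/2) * Real.exp (-y ^ 2)) (Ioi r) :=
      (aux_int_sq r hr).sub (hexp.const_mul _)
    have htend : Tendsto (fun y : ℝ => -(y/2) * Real.exp (-y ^ 2)) atTop (nhds 0) := by
      have := aux_tendsto.const_mul (-(1/2) : ℝ)
      simp only [mul_zero] at this
      convert this using 2 with y
      ring
    have hderiv := integral_Ioi_of_hasDerivAt_of_tendsto
      ((hH r).continuousAt.continuousWithinAt) (fun x _ => hH x) hint htend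
    rw [integral_sub (aux_int_sq r hr) (hexp.const_mul _)] at hderiv
    rw [hcong]
    have : (∫ y in Ioi r, y ^ 2 * Real.exp (-y ^ 2))
        = (r/2) * Real.exp (-r ^ 2) + (1/2) * ∫ t in Ioi r, Real.exp (-t ^ 2) := by
      have h0 := hderiv
      rw [integral_const_mul] at h0
      linarith [h0]
    rw [this]
  rw [hsplit, hA, hB]
  have hs : Real.sqrt Real.pi ≠ 0 := ne_of_gt (Real.sqrt_pos.2 hπ)
  field_simp
  ring
end

section
/- Let z be a standard circularly symmetric complex Gaussian with density (1/π)e^{−|z|²}, let M ≥ 2, and let x̂(z) be a nearest point to z in the M-PSK constellation 𝕏_M = {e^{i2πk/M}}. Then E[ Re( z̄ · x̂(z) ) ] = M·sin(π/M) / (2√π). -/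
open MeasureTheory Set

lemma aux_cos_le {a y : ℝ} (ha : 0 ≤ a) (ha2 : a ≤ Real.pi) (h1 : a ≤ y)
    (h2 : y ≤ 2 * Real.pi - a) : Real.cos y ≤ Real.cos a := by
  rcases le_total y Real.pi with h | h
  · exact Real.cos_le_cos_of_nonneg_of_le_pi ha h h1
  · rw [show y = 2 * Real.pi - (2 * Real.pi - y) by ring, Real.cos_two_pi_sub]
    exact Real.cos_le_cos_of_nonneg_of_le_pi ha (by linarith) (by linarith)

lemma aux_sup'_mul {s : Finset ℕ} (hs : s.Nonempty) {r : ℝ} (hr : 0 ≤ r) (f : ℕ → ℝ) :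
    s.sup' hs (fun k => r * f k) = r * s.sup' hs f := by
  apply le_antisymm
  · exact Finset.sup'_le _ _ fun k hk => mul_le_mul_of_nonneg_left (Finset.le_sup' f hk) hr
  · obtain ⟨k, hk, hke⟩ := Finset.exists_mem_eq_sup' hs f
    rw [hke]
    exact Finset.le_sup' (fun k => r * f k) hk

theorem stmt_10 (M : ℕ) (hM : 2 ≤ M)
    (X : Set ℂ)
    (hX : X = {x : ℂ | ∃ k : ℕ, k < M ∧ x = Complex.exp (Complex.I * (2 * Real.pi * k / M))})
    (xhat : ℂ → ℂ)
    (hmem : ∀ z, xhat z ∈ X)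
    (hmin : ∀ z, ∀ x ∈ X, ‖z - xhat z‖ ≤ ‖z - x‖) :
    ∫ z : ℂ, ((starRingEnd ℂ) z * xhat z).re *
        ((1 / Real.pi) * Real.exp (-(‖z‖) ^ 2))
      = M * Real.sin (Real.pi / M) / (2 * Real.sqrt Real.pi) := by
  have hM0 : (0:ℝ) < (M:ℝ) := by exact_mod_cast Nat.lt_of_lt_of_le (by norm_num) hM
  have hMne : (M:ℝ) ≠ 0 := ne_of_gt hM0
  have hne : (Finset.range M).Nonempty := ⟨0, Finset.mem_range.2 (by omega)⟩
  set φ : ℕ → ℝ := fun k => 2 * Real.pi * k / M with hφ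
  set c : ℕ → ℂ := fun k => Complex.exp (Complex.I * (2 * Real.pi * k / M)) with hc
  have hcφ : ∀ k, c k = Complex.exp ((φ k : ℝ) * Complex.I) := by
    intro k
    simp only [hc, hφ]
    exact congrArg Complex.exp (by push_cast; ring)
  have habs : ∀ k, ‖c k‖ = 1 := fun k => by
    rw [hcφ]; exact Complex.norm_exp_ofReal_mul_I _
  have hXc : ∀ x ∈ X, ∃ k, k < M ∧ x = c k := by
    intro x hx
    rw [hX] at hx
    exact hx
  have hxabs : ∀ z, ‖xhat z‖ = 1 := by
    intro z
    obtain ⟨k, _, hk⟩ := hXc _ (hmem z)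
    rw [hk]; exact habs k
  -- Step 1 : pointwise identification of the integrand
  have key : ∀ z : ℂ, ((starRingEnd ℂ) z * xhat z).re
      = (Finset.range M).sup' hne (fun k => ((starRingEnd ℂ) z * c k).re) := by
    intro z
    have hre2 : ∀ w : ℂ, ((starRingEnd ℂ) z * w).re = (z * (starRingEnd ℂ) w).re := by
      intro w
      simp only [Complex.mul_re, Complex.conj_re, Complex.conj_im]
      ring
    apply le_antisymm
    · obtain ⟨k, hk, hke⟩ := hXc _ (hmem z)
      rw [hke]
      exact Finset.le_sup' (fun k => ((starRingEnd ℂ) z * c k).re) (Finset.mem_range.2 hk)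
    · apply Finset.sup'_le
      intro k hk
      have hck : c k ∈ X := by
        rw [hX]; exact ⟨k, Finset.mem_range.1 hk, rfl⟩
      have h := hmin z (c k) hck
      have h2 : Complex.normSq (z - xhat z) ≤ Complex.normSq (z - c k) := by
        rw [← Complex.sq_norm, ← Complex.sq_norm]
        exact pow_le_pow_left₀ (norm_nonneg _) h 2
      rw [Complex.normSq_sub, Complex.normSq_sub] at h2
      have e1 : Complex.normSq (xhat z) = 1 := by rw [← Complex.sq_norm, hxabs z, one_pow]
      have e2 : Complex.normSq (c k) = 1 := by rw [← Complex.sq_norm, habs k, one_pow]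
      rw [hre2, hre2]
      linarith
  simp_rw [key]
  -- Step 2 : polar coordinates
  rw [← Complex.integral_comp_polarCoord_symm]
  set S : ℝ → ℝ := fun θ => (Finset.range M).sup' hne (fun k => Real.cos (θ - φ k)) with hS
  have hcongr : EqOn
      (fun p : ℝ × ℝ => p.1 •
        ((Finset.range M).sup' hne
            (fun k => ((starRingEnd ℂ) (Complex.polarCoord.symm p) * c k).re) *
          ((1 / Real.pi) * Real.exp (-(‖Complex.polarCoord.symm p‖) ^ 2))))
      (fun p : ℝ × ℝ => (p.1 ^ 2 * Real.exp (-p.1 ^ 2)) * ((1 / Real.pi) * S p.2))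
      polarCoord.target := by
    rintro ⟨r, θ⟩ ⟨hr, hθ⟩
    have hr0 : (0:ℝ) < r := hr
    have habs' : ‖Complex.polarCoord.symm (r, θ)‖ = r := by
      rw [Complex.norm_polarCoord_symm, abs_of_pos hr0]
    have hsymm : Complex.polarCoord.symm (r, θ) = (r : ℂ) * Complex.exp ((θ:ℝ) * Complex.I) := by
      rw [Complex.polarCoord_symm_apply, Complex.exp_mul_I]
      push_cast
      ring
    have hterm : ∀ k, ((starRingEnd ℂ) (Complex.polarCoord.symm (r, θ)) * c k).re
        = r * Real.cos (θ - φ k) := by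
      intro k
      rw [hsymm, hcφ]
      have : (starRingEnd ℂ) ((r:ℂ) * Complex.exp ((θ:ℝ) * Complex.I)) *
          Complex.exp ((φ k : ℝ) * Complex.I)
          = (r:ℂ) * Complex.exp (((φ k - θ : ℝ) : ℂ) * Complex.I) := by
        rw [map_mul, Complex.conj_ofReal, ← Complex.exp_conj, mul_assoc, ← Complex.exp_add]
        congr 2
        rw [map_mul, Complex.conj_ofReal, Complex.conj_I]
        push_cast
        ring
      rw [this, Complex.re_ofReal_mul, Complex.exp_ofReal_mul_I_re,
        show φ k - θ = -(θ - φ k) by ring, Real.cos_neg]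
    have hsup : ((Finset.range M).sup' hne
        (fun k => ((starRingEnd ℂ) (Complex.polarCoord.symm (r, θ)) * c k).re)) = r * S θ := by
      rw [hS, ← aux_sup'_mul hne hr0.le]
      exact Finset.sup'_congr hne rfl (fun k _ => hterm k)
    simp only [smul_eq_mul, habs', hsup]
    ring
  rw [setIntegral_congr_fun polarCoord.open_target.measurableSet hcongr]
  rw [show polarCoord.target = Ioi (0:ℝ) ×ˢ Ioo (-Real.pi) Real.pi from rfl, Measure.volume_eq_prod, ← Measure.prod_restrict]
  rw [integral_prod_mul (f := fun x : ℝ => x ^ 2 * Real.exp (-x ^ 2))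
    (g := fun y : ℝ => (1 / Real.pi) * S y)]
  -- the radial integral
  have hr_int : ∫ x in Ioi (0:ℝ), x ^ 2 * Real.exp (-x ^ 2) = Real.sqrt Real.pi / 4 := by
    have heq : EqOn (fun x : ℝ => x ^ 2 * Real.exp (-x ^ 2))
        (fun x : ℝ => x ^ (2:ℝ) * Real.exp (-x ^ (2:ℝ))) (Ioi 0) := by
      intro x _
      simp [Real.rpow_two]
    rw [setIntegral_congr_fun measurableSet_Ioi heq]
    rw [integral_rpow_mul_exp_neg_rpow two_pos (by norm_num)]
    rw [show ((2:ℝ) + 1) / 2 = 1/2 + 1 by norm_num]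
    rw [Real.Gamma_add_one (by norm_num), Real.Gamma_one_half_eq]
    ring
  -- the angular integral
  have hScont : Continuous S := by
    apply Continuous.finset_sup'_apply hne
    intro k _
    exact Real.continuous_cos.comp (continuous_id.sub continuous_const)
  have hInt : ∀ t₁ t₂ : ℝ, IntervalIntegrable S volume t₁ t₂ := fun t₁ t₂ =>
    hScont.intervalIntegrable t₁ t₂
  have hper : Function.Periodic S (2 * Real.pi / M) := by
    intro θ
    simp only [hS]
    apply le_antisymm
    · apply Finset.sup'_le
      intro k hk
      have hkM := Finset.mem_range.1 hk
      rcases Nat.eq_zero_or_pos k with rfl | hkpos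
      · have heq : θ + 2 * Real.pi / M - φ 0 = (θ - φ (M - 1)) + 2 * Real.pi := by
          simp only [hφ]
          push_cast [Nat.cast_sub (by omega : 1 ≤ M)]
          field_simp
          ring
        rw [heq, Real.cos_add_two_pi]
        exact Finset.le_sup' (fun k => Real.cos (θ - φ k)) (Finset.mem_range.2 (by omega))
      · obtain ⟨j, rfl⟩ : ∃ j, k = j + 1 := ⟨k - 1, by omega⟩
        have heq : θ + 2 * Real.pi / M - φ (j + 1) = θ - φ j := by
          simp only [hφ]
          push_cast
          field_simp
          ring
        rw [heq]
        exact Finset.le_sup' (fun k => Real.cos (θ - φ k)) (Finset.mem_range.2 (by omega))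
    · apply Finset.sup'_le
      intro k hk
      have hkM := Finset.mem_range.1 hk
      by_cases hk1 : k + 1 < M
      · have heq : θ - φ k = θ + 2 * Real.pi / M - φ (k + 1) := by
          simp only [hφ]
          push_cast
          field_simp
          ring
        rw [heq]
        exact Finset.le_sup' (fun k => Real.cos (θ + 2 * Real.pi / M - φ k)) (Finset.mem_range.2 hk1)
      · have hkM1 : k = M - 1 := by omega
        subst hkM1
        have heq : θ - φ (M - 1) = (θ + 2 * Real.pi / M - φ 0) - 2 * Real.pi := by
          simp only [hφ]
          push_cast [Nat.cast_sub (by omega : 1 ≤ M)]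
          field_simp
          ring
        rw [heq, Real.cos_sub_two_pi]
        exact Finset.le_sup' (fun k => Real.cos (θ + 2 * Real.pi / M - φ k)) (Finset.mem_range.2 (by omega))
  -- S equals cos on [-π/M, π/M]
  have hπM_pos : 0 < Real.pi / M := div_pos Real.pi_pos hM0
  have hM1 : (1:ℝ) ≤ (M:ℝ) := by exact_mod_cast (by omega : 1 ≤ M)
  have hπM_le : Real.pi / M ≤ Real.pi := by
    rw [div_le_iff₀ hM0]
    nlinarith [Real.pi_pos]
  have hcos : ∀ θ ∈ Icc (-(Real.pi / M)) (Real.pi / M), S θ = Real.cos θ := by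
    intro θ hθ
    simp only [hS]
    apply le_antisymm
    · apply Finset.sup'_le
      intro k hk
      have hkM := Finset.mem_range.1 hk
      rcases Nat.eq_zero_or_pos k with rfl | hkpos
      · have : φ 0 = 0 := by simp [hφ]
        rw [this, sub_zero]
      · have hk1 : (1:ℝ) ≤ (k:ℝ) := by exact_mod_cast hkpos
        have hk2 : (k:ℝ) ≤ (M:ℝ) - 1 := by
          have : (k:ℝ) + 1 ≤ (M:ℝ) := by exact_mod_cast hkM
          linarith
        have hcosθ : Real.cos (Real.pi / M) ≤ Real.cos θ := by
          rw [← Real.cos_abs θ]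
          apply Real.cos_le_cos_of_nonneg_of_le_pi (abs_nonneg θ) hπM_le
          rw [abs_le]
          exact ⟨hθ.1, hθ.2⟩
        have hlow : 2 * Real.pi / M ≤ φ k := by
          simp only [hφ]
          rw [show (2:ℝ) * Real.pi / M = 2 * Real.pi * 1 / M by ring]
          gcongr
        have hhigh : φ k ≤ 2 * Real.pi - 2 * Real.pi / M := by
          have h1 : φ k ≤ 2 * Real.pi * ((M:ℝ) - 1) / M := by
            simp only [hφ]
            gcongr
          have h2 : 2 * Real.pi * ((M:ℝ) - 1) / M = 2 * Real.pi - 2 * Real.pi / M := by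
            field_simp
          linarith
        have hdiv : 2 * Real.pi / (M:ℝ) = 2 * (Real.pi / M) := by ring
        rw [show θ - φ k = -(φ k - θ) by ring, Real.cos_neg]
        refine le_trans (aux_cos_le hπM_pos.le hπM_le ?_ ?_) hcosθ
        · have : θ ≤ Real.pi / M := hθ.2
          have h3 : 2 * Real.pi / M - Real.pi / M = Real.pi / M := by ring
          linarith
        · have : -(Real.pi / M) ≤ θ := hθ.1
          linarith
    · have : Real.cos θ = Real.cos (θ - φ 0) := by simp [hφ]
      rw [this]
      exact Finset.le_sup' (fun k => Real.cos (θ - φ k)) (Finset.mem_range.2 (by omega))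
  have hθ_int : ∫ y in Ioo (-Real.pi) Real.pi, S y = (M:ℝ) * (2 * Real.sin (Real.pi / M)) := by
    have h1 : ∫ y in Ioo (-Real.pi) Real.pi, S y = ∫ y in (-Real.pi)..Real.pi, S y := by
      rw [intervalIntegral.integral_of_le (by linarith [Real.pi_pos]),
        integral_Ioc_eq_integral_Ioo]
    have h2 : (Real.pi : ℝ) = -Real.pi + (M:ℤ) • (2 * Real.pi / M) := by
      rw [zsmul_eq_mul]
      push_cast
      field_simp
      ring
    have h3 : ∫ y in (-Real.pi)..Real.pi, S y
        = (M:ℤ) • ∫ y in (-Real.pi)..(-Real.pi + 2 * Real.pi / M), S y := by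
      rw [show ∫ y in (-Real.pi)..Real.pi, S y
          = ∫ y in (-Real.pi)..(-Real.pi + (M:ℤ) • (2 * Real.pi / M)), S y by rw [← h2]]
      exact hper.intervalIntegral_add_zsmul_eq (M:ℤ) (-Real.pi) hInt
    have h4 : ∫ y in (-Real.pi)..(-Real.pi + 2 * Real.pi / M), S y
        = ∫ y in (-(Real.pi / M))..(-(Real.pi / M) + 2 * Real.pi / M), S y :=
      hper.intervalIntegral_add_eq (-Real.pi) (-(Real.pi / M))
    have h5 : -(Real.pi / M) + 2 * Real.pi / M = Real.pi / M := by ring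
    have h6 : ∫ y in (-(Real.pi / M))..(Real.pi / M), S y = 2 * Real.sin (Real.pi / M) := by
      rw [intervalIntegral.integral_congr (g := Real.cos)
        (by
          intro x hx
          rw [Set.uIcc_of_le (by linarith)] at hx
          exact hcos x hx)]
      rw [integral_cos, Real.sin_neg]
      ring
    rw [h1, h3, h4, h5, h6, zsmul_eq_mul]
    push_cast
    ring
  rw [hr_int, integral_const_mul, hθ_int]
  have hπ : Real.sqrt Real.pi * Real.sqrt Real.pi = Real.pi :=
    Real.mul_self_sqrt Real.pi_pos.le
  have hs : Real.sqrt Real.pi ≠ 0 := by positivity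
  have hp : Real.pi ≠ 0 := Real.pi_ne_zero
  rw [eq_div_iff (by positivity : (2:ℝ) * Real.sqrt Real.pi ≠ 0)]
  field_simp
  linear_combination (4 * Real.sin (Real.pi / M)) * hπ
end
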